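/- Fix κ > 0, ξ > 0 and t > 0, and define ρ± := e^{−2κt}·(ξ(e^{2κt} − 1) ± (e^{κt} + 1)·√(16κ²e^{2κt} + ξ²(1 − e^{κt})²)) / (8κ). Then: (a) −1 < ρ₋ < 0; (b) ρ₊ > 1/2; (c) if moreover κ/ξ > ρ₊, then ρ₊ < 1. Furthermore, for t = 0 one has ρ₊ = 1 and ρ₋ = −1. -/

import Mathlib

open Filter Topology Set

/-- `ρ₊ := e^{−2κt}(ξ(e^{2κt} − 1) + (e^{κt} + 1)√(16κ²e^{2κt} + ξ²(1 − e^{κt})²))/(8κ)`. -/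
noncomputable def rhoPlus (κ ξ t : ℝ) : ℝ :=
  Real.exp (-2 * κ * t) * (ξ * (Real.exp (2 * κ * t) - 1) +
    (Real.exp (κ * t) + 1) *
      Real.sqrt (16 * κ ^ 2 * Real.exp (2 * κ * t) + ξ ^ 2 * (1 - Real.exp (κ * t)) ^ 2)) /
    (8 * κ)

/-- `ρ₋ := e^{−2κt}(ξ(e^{2κt} − 1) − (e^{κt} + 1)√(16κ²e^{2κt} + ξ²(1 − e^{κt})²))/(8κ)`. -/
noncomputable def rhoMinus (κ ξ t : ℝ) : ℝ :=
  Real.exp (-2 * κ * t) * (ξ * (Real.exp (2 * κ * t) - 1) -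
    (Real.exp (κ * t) + 1) *
      Real.sqrt (16 * κ ^ 2 * Real.exp (2 * κ * t) + ξ ^ 2 * (1 - Real.exp (κ * t)) ^ 2)) /
    (8 * κ)

set_option maxHeartbeats 1000000 in
/-- Lemma 5.12(i) of the paper: for `κ, ξ > 0` and `t > 0`:
(a) `−1 < ρ₋ < 0`; (b) `ρ₊ > 1/2`; (c) if `κ/ξ > ρ₊` then `ρ₊ < 1`.
Furthermore, for `t = 0` one has `ρ₊ = 1` and `ρ₋ = −1`. -/
theorem statement15 (κ ξ : ℝ) (hκ : 0 < κ) (hξ : 0 < ξ) :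
    (∀ t : ℝ, 0 < t →
        (-1 < rhoMinus κ ξ t ∧ rhoMinus κ ξ t < 0) ∧
        (1 / 2 < rhoPlus κ ξ t) ∧
        (rhoPlus κ ξ t < κ / ξ → rhoPlus κ ξ t < 1)) ∧
      rhoPlus κ ξ 0 = 1 ∧ rhoMinus κ ξ 0 = -1 := by
  constructor
  · intro t ht
    have hE : 1 < Real.exp (κ * t) := by
      have := Real.exp_lt_exp.mpr (show (0:ℝ) < κ * t by positivity)
      simpa using this
    obtain ⟨E, hEdef⟩ : ∃ E, Real.exp (κ * t) = E := ⟨_, rfl⟩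
    rw [hEdef] at hE
    have hE0 : 0 < E := by linarith
    have hE1 : 0 < E - 1 := by linarith
    have hE2 : 1 < E ^ 2 := by nlinarith
    have h2 : Real.exp (2 * κ * t) = E ^ 2 := by
      rw [show (2:ℝ) * κ * t = κ * t + κ * t by ring, Real.exp_add, hEdef]; ring
    have hm : Real.exp (-2 * κ * t) = (E ^ 2)⁻¹ := by
      rw [show (-2:ℝ) * κ * t = -(2 * κ * t) by ring, Real.exp_neg, h2]
    obtain ⟨S, hSdef⟩ : ∃ S, Real.sqrt (16 * κ ^ 2 * E ^ 2 + ξ ^ 2 * (1 - E) ^ 2) = S :=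
      ⟨_, rfl⟩
    have hS0 : 0 ≤ S := hSdef ▸ Real.sqrt_nonneg _
    have hS2 : S ^ 2 = 16 * κ ^ 2 * E ^ 2 + ξ ^ 2 * (1 - E) ^ 2 := by
      rw [← hSdef]; exact Real.sq_sqrt (by positivity)
    have hS4 : 4 * κ * E ≤ S := by
      by_contra hcon
      push_neg at hcon
      nlinarith [mul_pos hκ hE0, sq_nonneg (1 - E)]
    have hden : (0:ℝ) < 8 * κ * E ^ 2 := by positivity
    have hMinus : rhoMinus κ ξ t = (ξ * (E ^ 2 - 1) - (E + 1) * S) / (8 * κ * E ^ 2) := by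
      rw [rhoMinus, h2, hm, hEdef, hSdef]
      have h1 : (E:ℝ) ^ 2 ≠ 0 := by positivity
      field_simp
    have hPlus : rhoPlus κ ξ t = (ξ * (E ^ 2 - 1) + (E + 1) * S) / (8 * κ * E ^ 2) := by
      rw [rhoPlus, h2, hm, hEdef, hSdef]
      have h1 : (E:ℝ) ^ 2 ≠ 0 := by positivity
      field_simp
    have hhalf : 1 / 2 < rhoPlus κ ξ t := by
      rw [hPlus, lt_div_iff₀ hden]
      have h4 : (E + 1) * (4 * κ * E) ≤ (E + 1) * S :=
        mul_le_mul_of_nonneg_left hS4 (by linarith)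
      have pξ : 0 < ξ * (E ^ 2 - 1) := mul_pos hξ (by linarith)
      nlinarith [mul_pos hκ hE0]
    refine ⟨⟨?_, ?_⟩, hhalf, ?_⟩
    · -- -1 < rhoMinus
      rw [hMinus, lt_div_iff₀ hden]
      have hC : 0 < ξ * (E ^ 2 - 1) + 8 * κ * E ^ 2 := by nlinarith
      have hub : (E + 1) * S < ξ * (E ^ 2 - 1) + 8 * κ * E ^ 2 := by
        refine lt_of_pow_lt_pow_left₀ 2 hC.le ?_
        rw [mul_pow (E + 1) S 2, hS2]
        have key : 0 < (κ * E ^ 2) * ((E - 1) * (ξ * (E + 1) + κ * (3 * E + 1))) :=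
          mul_pos (mul_pos hκ (pow_pos hE0 2))
            (mul_pos hE1 (by nlinarith))
        nlinarith [key]
      linarith
    · -- rhoMinus < 0
      rw [hMinus]
      apply div_neg_of_neg_of_pos _ hden
      have hlb : ξ * (E ^ 2 - 1) < (E + 1) * S := by
        refine lt_of_pow_lt_pow_left₀ 2 (mul_nonneg (by linarith) hS0) ?_
        rw [mul_pow (E + 1) S 2, hS2]
        have key : 0 < (κ * E * (E + 1)) ^ 2 := by positivity
        nlinarith [key]
      linarith
    · -- (c)
      intro h
      have hhk : (1:ℝ) / 2 < κ / ξ := lt_trans hhalf h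
      have hξ2 : ξ < 2 * κ := by
        rw [lt_div_iff₀ hξ] at hhk; linarith
      have p1 : 0 < (2 * κ - ξ) * (E + 1) :=
        mul_pos (by linarith) (by linarith)
      have p2 : 0 < κ * (E - 1) := mul_pos hκ hE1
      have hcond : ξ * (E + 1) < κ * (3 * E + 1) := by nlinarith [p1, p2]
      rw [hPlus, div_lt_one hden]
      have q1 : ξ * (E + 1) * (E - 1) < κ * (3 * E + 1) * (E - 1) :=
        mul_lt_mul_of_pos_right hcond hE1
      have q2 : 0 < κ * E ^ 2 := by positivity
      have q3 : 0 < κ * E := by positivity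
      have hC : 0 < 8 * κ * E ^ 2 - ξ * (E ^ 2 - 1) := by nlinarith [q1, q2, q3]
      have hub : (E + 1) * S < 8 * κ * E ^ 2 - ξ * (E ^ 2 - 1) := by
        refine lt_of_pow_lt_pow_left₀ 2 hC.le ?_
        rw [mul_pow (E + 1) S 2, hS2]
        have key : 0 < (κ * E ^ 2) * ((E - 1) * (κ * (3 * E + 1) - ξ * (E + 1))) :=
          mul_pos (mul_pos hκ (pow_pos hE0 2)) (mul_pos hE1 (by linarith))
        nlinarith [key]
      linarith
  · have hs : Real.sqrt (16 * κ ^ 2 * Real.exp (2 * κ * 0) + ξ ^ 2 *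
        (1 - Real.exp (κ * 0)) ^ 2) = 4 * κ := by
      simp only [mul_zero, Real.exp_zero, mul_one, sub_self]
      rw [show 16 * κ ^ 2 + ξ ^ 2 * 0 ^ 2 = (4 * κ) ^ 2 by ring]
      exact Real.sqrt_sq (by linarith)
    constructor
    · rw [rhoPlus, hs]
      simp only [mul_zero, Real.exp_zero]
      field_simp
      ring
    · rw [rhoMinus, hs]
      simp only [mul_zero, Real.exp_zero]
      field_simp
      ring
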